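/- If m is a product of distinct primes, then every matching vector family in Z_m^n has size at most 100·m^{n/2+4+o_m(1)}; concretely, for every ε > 0 there exists M such that for all squarefree m ≥ M, every MV family in Z_m^n has size at most m^{n/2+4+ε}. -/

import Mathlib

/-- A matching vector family in `Z_m^n`: vectors are represented with coordinates
in `{0, ..., m-1}`, inner products are taken over the integers and reduced mod `m`. -/
def IsMVFamily (m n t : ℕ) (u v : Fin t → Fin n → ℕ) : Prop :=
  (∀ i k, u i k < m) ∧ (∀ i k, v i k < m) ∧
  (∀ i, (∑ k, u i k * v i k) % m = 0) ∧
  (∀ i j, i ≠ j → (∑ k, u i k * v j k) % m ≠ 0)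

/-- The family `(u, v)` respects the partition `(r₁, r₂, r₃)` of `m`. -/
def Respects (m n t r₁ r₂ r₃ : ℕ) (u v : Fin t → Fin n → ℕ) : Prop :=
  r₁ * r₂ * r₃ = m ∧ 0 < r₁ ∧ 0 < r₂ ∧ 0 < r₃ ∧
  (∀ i j k, u i k % r₁ = u j k % r₁) ∧
  (∀ i j k, v i k % r₂ = v j k % r₂) ∧
  (∀ i j, (∑ k, (u i k / r₁) * (v i k % r₂)) % r₂ =
          (∑ k, (u j k / r₁) * (v j k % r₂)) % r₂) ∧
  (∀ i j, (∑ k, (u i k % r₁) * (v i k / r₂)) % r₁ =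
          (∑ k, (u j k % r₁) * (v j k / r₂)) % r₁)

open Finset

namespace MVAux

lemma sum_mod_congr {α : Type*} (s : Finset α) (f g : α → ℕ) (n : ℕ)
    (h : ∀ a ∈ s, f a % n = g a % n) :
    (∑ a ∈ s, f a) % n = (∑ a ∈ s, g a) % n := by
  rw [Finset.sum_nat_mod, Finset.sum_congr rfl h, ← Finset.sum_nat_mod]

lemma mv_swap {m n t : ℕ} {u v : Fin t → Fin n → ℕ} (h : IsMVFamily m n t u v) :
    IsMVFamily m n t v u := by
  obtain ⟨h1, h2, h3, h4⟩ := h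
  refine ⟨h2, h1, ?_, ?_⟩
  · intro i; simpa [mul_comm] using h3 i
  · intro i j hij
    have := h4 j i (Ne.symm hij)
    simpa [mul_comm] using this

lemma mv_sub {m s d n t : ℕ} (hd : 0 < d) (hm : s * d = m) (hco : Nat.Coprime s d)
    {u v : Fin t → Fin n → ℕ} (h : IsMVFamily m n t u v) (i₀ : Fin t)
    {B : ℝ} (hB : ∀ t' (u' v' : Fin t' → Fin n → ℕ), IsMVFamily d n t' u' v' → (t' : ℝ) ≤ B) :
    (((univ.filter fun j => ∀ k, u j k % s = u i₀ k % s)).card : ℝ) ≤ B := by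
  obtain ⟨hu, hv, hdiag, hoff⟩ := h
  set S := (univ.filter fun j : Fin t => ∀ k, u j k % s = u i₀ k % s) with hSdef
  have hdm : d ∣ m := ⟨s, by rw [← hm, mul_comm]⟩
  have hsm : s ∣ m := ⟨d, hm.symm⟩
  let E : Fin S.card ≃o {x // x ∈ S} := S.orderIsoOfFin rfl
  let e : Fin S.card → Fin t := fun a => (E a : Fin t)
  have he_mem : ∀ a, ∀ k, u (e a) k % s = u i₀ k % s := by
    intro a
    have h' := (E a).2
    simp only [hSdef, mem_filter, mem_univ, true_and] at h'
    exact h'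
  have he_inj : Function.Injective e := fun a b hab =>
    E.injective (Subtype.ext hab)
  apply hB S.card (fun a k => u (e a) k % d) (fun a k => v (e a) k % d)
  refine ⟨fun i k => Nat.mod_lt _ hd, fun i k => Nat.mod_lt _ hd, ?_, ?_⟩
  · intro a
    have h1 : (∑ k, u (e a) k % d * (v (e a) k % d)) % d
        = (∑ k, u (e a) k * v (e a) k) % d := by
      apply sum_mod_congr
      intro k _
      conv_rhs => rw [Nat.mul_mod]
    rw [h1]
    exact Nat.mod_eq_zero_of_dvd
      (dvd_trans hdm (Nat.dvd_of_mod_eq_zero (hdiag (e a))))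
  · intro a b hab hcon
    have hdvd_d : d ∣ ∑ k, u (e a) k * v (e b) k := by
      apply Nat.dvd_of_mod_eq_zero
      rw [show (∑ k, u (e a) k * v (e b) k) % d
          = (∑ k, u (e a) k % d * (v (e b) k % d)) % d by
        apply sum_mod_congr; intro k _; conv_lhs => rw [Nat.mul_mod]]
      exact hcon
    have hdvd_s : s ∣ ∑ k, u (e a) k * v (e b) k := by
      apply Nat.dvd_of_mod_eq_zero
      have hc1 : (∑ k, u (e a) k * v (e b) k) % s
          = (∑ k, u (e b) k * v (e b) k) % s := by
        apply sum_mod_congr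
        intro k _
        rw [Nat.mul_mod, he_mem a k, ← he_mem b k, ← Nat.mul_mod]
      rw [hc1]
      exact Nat.mod_eq_zero_of_dvd
        (dvd_trans hsm (Nat.dvd_of_mod_eq_zero (hdiag (e b))))
    have hm_dvd : m ∣ ∑ k, u (e a) k * v (e b) k := by
      rw [← hm]
      exact hco.mul_dvd_of_dvd_of_dvd hdvd_s hdvd_d
    exact hoff (e a) (e b) (fun hh => hab (he_inj hh))
      (Nat.mod_eq_zero_of_dvd hm_dvd)

lemma charsum_bound {s : ℕ} (hs : 0 < s) {η : ℂ} (hη : IsPrimitiveRoot η s)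
    {n t : ℕ} (u v : Fin t → Fin n → ℕ) :
    ‖∑ i : Fin t, ∑ j : Fin t, η ^ (∑ k, u i k * v j k)‖ ≤
      Real.sqrt (∑ i : Fin t,
          ((univ.filter fun i' => ∀ k, u i' k % s = u i k % s).card : ℝ)) *
      Real.sqrt ((s : ℝ) ^ n * ∑ j : Fin t,
          ((univ.filter fun j' => ∀ k, v j' k % s = v j k % s).card : ℝ)) := by
  have hη1 : η ^ s = 1 := hη.pow_eq_one
  have hη0 : η ≠ 0 := by
    intro h
    rw [h, zero_pow hs.ne'] at hη1
    exact zero_ne_one hη1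
  have hmod : ∀ x : ℕ, η ^ x = η ^ (x % s) := by
    intro x
    conv_lhs => rw [← Nat.div_add_mod x s]
    rw [pow_add, pow_mul, hη1, one_pow, one_mul]
  set ru : Fin t → (Fin n → ℕ) := fun i k => u i k % s with hru
  set rv : Fin t → (Fin n → ℕ) := fun j k => v j k % s with hrv
  set A : Finset (Fin n → ℕ) := Fintype.piFinset (fun _ => Finset.range s) with hA
  set G : (Fin n → ℕ) → ℂ := fun a => ∑ j : Fin t, η ^ (∑ k, a k * rv j k) with hG
  have hmaps : ∀ i : Fin t, ru i ∈ A := by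
    intro i
    rw [hA, Fintype.mem_piFinset]
    intro k
    exact Finset.mem_range.mpr (Nat.mod_lt _ hs)
  -- Step 1 : reduce exponents mod s
  have step1 : ∑ i : Fin t, ∑ j : Fin t, η ^ (∑ k, u i k * v j k)
      = ∑ i : Fin t, G (ru i) := by
    refine Finset.sum_congr rfl fun i _ => Finset.sum_congr rfl fun j _ => ?_
    rw [hmod, hmod (∑ k, ru i k * rv j k)]
    congr 1
    apply sum_mod_congr
    intro k _
    rw [Nat.mul_mod (u i k), Nat.mul_mod (ru i k)]
  -- Step 2 : fiberwise
  have step2 : ∑ i : Fin t, G (ru i)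
      = ∑ a ∈ A, ((univ.filter fun i => ru i = a).card : ℂ) * G a := by
    rw [← Finset.sum_fiberwise_of_maps_to (fun i _ => hmaps i) (fun i => G (ru i))]
    refine Finset.sum_congr rfl fun a _ => ?_
    calc ∑ i ∈ univ.filter (fun i => ru i = a), G (ru i)
        = ∑ _i ∈ univ.filter (fun i => ru i = a), G a :=
          Finset.sum_congr rfl (fun i hi => by rw [(Finset.mem_filter.1 hi).2])
      _ = _ := by rw [Finset.sum_const, nsmul_eq_mul]
  -- Step 3 : triangle inequality
  have habs : ‖∑ i : Fin t, G (ru i)‖ ≤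
      ∑ a ∈ A, ((univ.filter fun i => ru i = a).card : ℝ) * ‖G a‖ := by
    rw [step2]
    refine (norm_sum_le _ _).trans (le_of_eq (Finset.sum_congr rfl fun a _ => ?_))
    rw [norm_mul, Complex.norm_natCast]
  -- Step 4 : Cauchy-Schwarz
  have hCS : ∑ a ∈ A, ((univ.filter fun i => ru i = a).card : ℝ) * ‖G a‖ ≤
      Real.sqrt (∑ a ∈ A, ((univ.filter fun i => ru i = a).card : ℝ)^2) *
      Real.sqrt (∑ a ∈ A, ‖G a‖^2) := by
    have h2 := Finset.sum_mul_sq_le_sq_mul_sq A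
      (fun a => ((univ.filter fun i => ru i = a).card : ℝ))
      (fun a => ‖G a‖)
    have hnn : (0:ℝ) ≤ ∑ a ∈ A, ((univ.filter fun i => ru i = a).card : ℝ) * ‖G a‖ :=
      Finset.sum_nonneg fun a _ => mul_nonneg (Nat.cast_nonneg _) (norm_nonneg _)
    calc ∑ a ∈ A, ((univ.filter fun i => ru i = a).card : ℝ) * ‖G a‖
        = Real.sqrt ((∑ a ∈ A, ((univ.filter fun i => ru i = a).card : ℝ) * ‖G a‖)^2) :=
          (Real.sqrt_sq hnn).symm
      _ ≤ Real.sqrt ((∑ a ∈ A, ((univ.filter fun i => ru i = a).card : ℝ)^2) *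
            ∑ a ∈ A, ‖G a‖^2) := Real.sqrt_le_sqrt h2
      _ = _ := Real.sqrt_mul (Finset.sum_nonneg fun a _ => sq_nonneg _) _
  -- Step 5 : first factor is the collision count
  have hcollu : ∑ a ∈ A, ((univ.filter fun i => ru i = a).card : ℝ)^2
      = ∑ i : Fin t, ((univ.filter fun i' => ∀ k, u i' k % s = u i k % s).card : ℝ) := by
    have hfeq : ∀ i : Fin t, (univ.filter fun i' => ∀ k, u i' k % s = u i k % s)
        = (univ.filter fun i' => ru i' = ru i) := by
      intro i
      apply Finset.filter_congr
      intro i' _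
      simp only [hru, funext_iff]
    calc ∑ a ∈ A, ((univ.filter fun i => ru i = a).card : ℝ)^2
        = ∑ a ∈ A, ∑ _i ∈ univ.filter (fun i => ru i = a),
            ((univ.filter fun i' => ru i' = a).card : ℝ) := by
          refine Finset.sum_congr rfl fun a _ => ?_
          rw [Finset.sum_const, nsmul_eq_mul, sq]
      _ = ∑ a ∈ A, ∑ i ∈ univ.filter (fun i => ru i = a),
            ((univ.filter fun i' => ru i' = ru i).card : ℝ) := by
          refine Finset.sum_congr rfl fun a _ => Finset.sum_congr rfl fun i hi => ?_
          rw [(Finset.mem_filter.1 hi).2]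
      _ = ∑ i : Fin t, ((univ.filter fun i' => ru i' = ru i).card : ℝ) :=
          Finset.sum_fiberwise_of_maps_to (fun i _ => hmaps i) _
      _ = _ := by
          refine (Finset.sum_congr rfl fun i _ => ?_).symm
          rw [hfeq i]
  -- Step 6 : second factor
  have habs1 : ‖η‖ = 1 := by
    have h' := congrArg (‖·‖) hη1
    rw [norm_pow, norm_one] at h'
    rcases lt_trichotomy (‖η‖) 1 with hlt | heq | hgt
    · exact absurd h' (by
        have := pow_lt_one₀ (norm_nonneg η) hlt hs.ne'
        linarith)
    · exact heq
    · exact absurd h' (by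
        have := one_lt_pow₀ hgt hs.ne'
        linarith)
  have hconj : (starRingEnd ℂ) η = η ^ (s - 1) := by
    have hinv : η⁻¹ = (starRingEnd ℂ) η :=
      RCLike.inv_eq_conj (by exact habs1)
    rw [← hinv]
    have hmul : η * η ^ (s - 1) = 1 := by
      rw [← pow_succ', Nat.sub_add_cancel hs]
      exact hη1
    exact inv_eq_of_mul_eq_one_right hmul
  have hGsum : ∑ a ∈ A, ‖G a‖^2
      = (s:ℝ)^n * ∑ j : Fin t,
          ((univ.filter fun j' => ∀ k, v j' k % s = v j k % s).card : ℝ) := by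
    have hGconj : ∀ a, (starRingEnd ℂ) (G a)
        = ∑ j : Fin t, η ^ ((s-1) * ∑ k, a k * rv j k) := by
      intro a
      rw [hG]
      simp only
      rw [map_sum]
      refine Finset.sum_congr rfl fun j _ => ?_
      rw [map_pow, hconj, ← pow_mul]
    have hL : ∑ a ∈ A, (G a * (starRingEnd ℂ) (G a))
        = (s:ℂ)^n * ∑ j : Fin t,
            ((univ.filter fun j' => ∀ k, v j' k % s = v j k % s).card : ℂ) := by
      calc ∑ a ∈ A, G a * (starRingEnd ℂ) (G a)
          = ∑ a ∈ A, ∑ j : Fin t, ∑ j' : Fin t,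
              η ^ ((∑ k, a k * rv j k) + (s-1) * ∑ k, a k * rv j' k) := by
            refine Finset.sum_congr rfl fun a _ => ?_
            rw [hGconj, hG]
            simp only
            rw [Finset.sum_mul_sum]
            exact Finset.sum_congr rfl fun j _ => Finset.sum_congr rfl fun j' _ =>
              (pow_add η _ _).symm
        _ = ∑ j : Fin t, ∑ j' : Fin t, ∑ a ∈ A,
              η ^ ((∑ k, a k * rv j k) + (s-1) * ∑ k, a k * rv j' k) := by
            rw [Finset.sum_comm]
            exact Finset.sum_congr rfl fun j _ => Finset.sum_comm
        _ = ∑ j : Fin t, ∑ j' : Fin t,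
              (if ∀ k, rv j k = rv j' k then (s:ℂ)^n else 0) := by
            refine Finset.sum_congr rfl fun j _ => Finset.sum_congr rfl fun j' _ => ?_
            have hfac : ∀ k : Fin n,
                ∑ x ∈ Finset.range s, (η ^ (rv j k + (s-1) * rv j' k)) ^ x
                = if rv j k = rv j' k then (s:ℂ) else 0 := by
              intro k
              have hdvd : s ∣ (rv j k + (s-1) * rv j' k) ↔ rv j k = rv j' k := by
                obtain ⟨s', rfl⟩ : ∃ s', s = s' + 1 := ⟨s - 1, (Nat.succ_pred_eq_of_pos hs).symm⟩
                have h1 : (rv j k + s' * rv j' k) + rv j' k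
                    = rv j k + (s' + 1) * rv j' k := by ring
                simp only [Nat.add_sub_cancel]
                constructor
                · rintro ⟨w, hw⟩
                  have h2 : ((s' + 1) * w + rv j' k) % (s' + 1)
                      = (rv j k + (s' + 1) * rv j' k) % (s' + 1) := by rw [← hw, h1]
                  rw [Nat.mul_add_mod, Nat.add_mul_mod_self_left] at h2
                  have hb1 : rv j' k < s' + 1 := Nat.mod_lt _ hs
                  have hb2 : rv j k < s' + 1 := Nat.mod_lt _ hs
                  rw [Nat.mod_eq_of_lt hb1, Nat.mod_eq_of_lt hb2] at h2
                  exact h2.symm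
                · intro heq
                  refine ⟨rv j' k, ?_⟩
                  have h3 : rv j k + s' * rv j' k + rv j' k
                      = (s' + 1) * rv j' k + rv j' k := by rw [heq]; ring
                  exact Nat.add_right_cancel h3
              by_cases hcase : rv j k = rv j' k
              · rw [if_pos hcase]
                have h1 : η ^ (rv j k + (s-1) * rv j' k) = 1 :=
                  (hη.pow_eq_one_iff_dvd _).mpr (hdvd.mpr hcase)
                rw [h1]
                simp
              · rw [if_neg hcase]
                have hne1 : η ^ (rv j k + (s-1) * rv j' k) ≠ 1 :=
                  fun h => hcase (hdvd.mp ((hη.pow_eq_one_iff_dvd _).mp h))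
                rw [geom_sum_eq hne1]
                have h2 : (η ^ (rv j k + (s-1) * rv j' k)) ^ s = 1 := by
                  rw [← pow_mul, mul_comm, pow_mul, hη1, one_pow]
                rw [h2]
                simp
            calc ∑ a ∈ A, η ^ ((∑ k, a k * rv j k) + (s-1) * ∑ k, a k * rv j' k)
                = ∑ a ∈ A, ∏ k, (η ^ (rv j k + (s-1) * rv j' k)) ^ (a k) := by
                  refine Finset.sum_congr rfl fun a _ => ?_
                  have hexp : (∑ k, a k * rv j k) + (s-1) * ∑ k, a k * rv j' k
                      = ∑ k, a k * (rv j k + (s-1) * rv j' k) := by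
                    rw [Finset.mul_sum, ← Finset.sum_add_distrib]
                    exact Finset.sum_congr rfl fun k _ => by ring
                  rw [hexp, ← Finset.prod_pow_eq_pow_sum]
                  exact Finset.prod_congr rfl fun k _ => by
                    rw [← pow_mul, mul_comm (a k)]
              _ = ∏ k : Fin n, ∑ x ∈ Finset.range s, (η ^ (rv j k + (s-1) * rv j' k)) ^ x := by
                  rw [hA]
                  exact Finset.sum_prod_piFinset _ _
              _ = ∏ k : Fin n, (if rv j k = rv j' k then (s:ℂ) else 0) :=
                  Finset.prod_congr rfl fun k _ => hfac k
              _ = if ∀ k, rv j k = rv j' k then (s:ℂ)^n else 0 := by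
                  by_cases hall : ∀ k, rv j k = rv j' k
                  · rw [if_pos hall]
                    calc ∏ k : Fin n, (if rv j k = rv j' k then (s:ℂ) else 0)
                        = ∏ _k : Fin n, (s:ℂ) :=
                          Finset.prod_congr rfl fun k _ => if_pos (hall k)
                      _ = (s:ℂ)^n := by
                          rw [Finset.prod_const, Finset.card_univ, Fintype.card_fin]
                  · rw [if_neg hall]
                    push_neg at hall
                    obtain ⟨k0, hk0⟩ := hall
                    exact Finset.prod_eq_zero (Finset.mem_univ k0) (if_neg hk0)
        _ = (s:ℂ)^n * ∑ j : Fin t,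
              ((univ.filter fun j' => ∀ k, v j' k % s = v j k % s).card : ℂ) := by
            rw [Finset.mul_sum]
            refine Finset.sum_congr rfl fun j _ => ?_
            rw [Finset.sum_ite, Finset.sum_const, Finset.sum_const_zero, add_zero,
              nsmul_eq_mul, mul_comm]
            congr 2
            apply congrArg Finset.card
            apply Finset.filter_congr
            intro j' _
            simp only [hrv]
            constructor
            · intro h k; exact (h k).symm
            · intro h k; exact (h k).symm
    have habs2 : ∀ a ∈ A, ((‖G a‖ : ℂ))^2 = G a * (starRingEnd ℂ) (G a) := by
      intro a _
      rw [Complex.mul_conj, ← Complex.sq_norm]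
      norm_cast
    have hcast : ((∑ a ∈ A, ‖G a‖^2 : ℝ) : ℂ)
        = (((s:ℝ)^n * ∑ j : Fin t,
            ((univ.filter fun j' => ∀ k, v j' k % s = v j k % s).card : ℝ) : ℝ) : ℂ) := by
      push_cast
      rw [Finset.sum_congr rfl habs2, hL]
    exact_mod_cast hcast
  -- conclusion
  calc ‖∑ i : Fin t, ∑ j : Fin t, η ^ (∑ k, u i k * v j k)‖
      = ‖∑ i : Fin t, G (ru i)‖ := by rw [step1]
    _ ≤ ∑ a ∈ A, ((univ.filter fun i => ru i = a).card : ℝ) * ‖G a‖ := habs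
    _ ≤ Real.sqrt (∑ a ∈ A, ((univ.filter fun i => ru i = a).card : ℝ)^2) *
        Real.sqrt (∑ a ∈ A, ‖G a‖^2) := hCS
    _ = _ := by rw [hcollu, hGsum]


lemma telescope : ∀ m : ℕ, 1 ≤ m → ∑ d ∈ Icc 2 m, (1/((d:ℝ)-1) - 1/d) = 1 - 1/m := by
  intro m
  induction m with
  | zero => intro h; omega
  | succ m ih =>
    intro _
    rcases Nat.eq_zero_or_pos m with rfl | hm
    · norm_num
    · rw [Finset.sum_Icc_succ_top (by omega : 2 ≤ m + 1), ih hm]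
      have hm0 : (m:ℝ) ≠ 0 := Nat.cast_ne_zero.mpr (by omega)
      have hm1 : ((m:ℕ):ℝ) + 1 ≠ 0 := by positivity
      push_cast
      ring

lemma properDivisors_sum_sq (m : ℕ) (hm : 1 ≤ m) :
    ∑ d ∈ m.properDivisors, (d:ℝ)^2 ≤ (m:ℝ)^2 - m := by
  have hm0 : m ≠ 0 := by omega
  have h1 : ∑ d ∈ m.divisors, (d:ℝ)^2 = (m:ℝ)^2 + ∑ d ∈ m.properDivisors, (d:ℝ)^2 := by
    rw [← Nat.cons_self_properDivisors hm0, Finset.sum_cons]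
  have h2 : ∑ d ∈ m.divisors, ((m / d : ℕ):ℝ)^2 = ∑ d ∈ m.divisors, (d:ℝ)^2 :=
    Nat.sum_div_divisors m (fun d => (d:ℝ)^2)
  have h3 : (1:ℕ) ∈ m.divisors := Nat.one_mem_divisors.mpr hm0
  have h4 : ∑ d ∈ m.divisors, ((m / d : ℕ):ℝ)^2
      = ((m/1 : ℕ):ℝ)^2 + ∑ d ∈ m.divisors.erase 1, ((m/d : ℕ):ℝ)^2 :=
    (Finset.add_sum_erase _ _ h3).symm
  have h5 : ∑ d ∈ m.divisors.erase 1, ((m/d:ℕ):ℝ)^2 ≤ (m:ℝ)^2 - m := by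
    have hsub : m.divisors.erase 1 ⊆ Icc 2 m := by
      intro d hd
      obtain ⟨hne, hdvd⟩ := Finset.mem_erase.mp hd
      rw [Nat.mem_divisors] at hdvd
      have hd1 : 1 ≤ d := Nat.pos_of_dvd_of_pos hdvd.1 (by omega)
      have hdm : d ≤ m := Nat.le_of_dvd (by omega) hdvd.1
      rw [Finset.mem_Icc]
      omega
    calc ∑ d ∈ m.divisors.erase 1, ((m/d:ℕ):ℝ)^2
        ≤ ∑ d ∈ m.divisors.erase 1, (m:ℝ)^2 * (1/((d:ℝ)-1) - 1/d) := by
          apply Finset.sum_le_sum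
          intro d hd
          obtain ⟨hne, hdvd⟩ := Finset.mem_erase.mp hd
          rw [Nat.mem_divisors] at hdvd
          have hd2 : 2 ≤ d := by
            have := Nat.pos_of_dvd_of_pos hdvd.1 (by omega)
            omega
          have hd2R : (2:ℝ) ≤ (d:ℝ) := by exact_mod_cast hd2
          have hdpos : (0:ℝ) < d := by linarith
          have hdm1 : (0:ℝ) < (d:ℝ) - 1 := by linarith
          rw [Nat.cast_div hdvd.1 (by positivity)]
          rw [div_pow]
          have key : (1/((d:ℝ)-1) - 1/d) = 1/(((d:ℝ)-1) * d) := by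
            field_simp
            ring
          rw [key]
          rw [div_le_iff₀ (by positivity)]
          have h8 : (0:ℝ) < ((d:ℝ)-1) * d := by positivity
          have e : (m:ℝ)^2 * (1 / (((d:ℝ)-1) * (d:ℝ))) * (d:ℝ)^2
              = (m:ℝ)^2 * ((d:ℝ)^2 / (((d:ℝ)-1) * (d:ℝ))) := by ring
          rw [e]
          have h7 : (1:ℝ) ≤ (d:ℝ)^2 / (((d:ℝ)-1) * (d:ℝ)) := by
            rw [le_div_iff₀ h8]
            nlinarith
          nlinarith [sq_nonneg (m:ℝ)]
      _ ≤ ∑ d ∈ Icc 2 m, (m:ℝ)^2 * (1/((d:ℝ)-1) - 1/d) := by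
          apply Finset.sum_le_sum_of_subset_of_nonneg hsub
          intro d hd _
          rw [Finset.mem_Icc] at hd
          have hd2R : (2:ℝ) ≤ (d:ℝ) := by exact_mod_cast hd.1
          have : 1/(d:ℝ) ≤ 1/((d:ℝ)-1) := by
            apply one_div_le_one_div_of_le <;> linarith
          nlinarith [sq_nonneg (m:ℝ)]
      _ = (m:ℝ)^2 * (1 - 1/m) := by
          rw [← Finset.mul_sum, telescope m hm]
      _ = (m:ℝ)^2 - m := by
          have hmR : (m:ℝ) ≠ 0 := Nat.cast_ne_zero.mpr hm0
          field_simp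
  have h8 : ((m/1 : ℕ):ℝ) = (m:ℝ) := by norm_num
  rw [h8] at h4
  linarith [h1, h2, h4, h5]

lemma gcd_cube_sum (m : ℕ) : ∑ c ∈ Ico 1 m, ((Nat.gcd c m : ℕ):ℝ)^3 ≤ (m:ℝ)^3 - (m:ℝ)^2 := by
  rcases Nat.lt_or_ge m 2 with hm | hm
  · interval_cases m <;> simp
  have hm0 : m ≠ 0 := by omega
  have hmaps : ∀ c ∈ Ico 1 m, Nat.gcd c m ∈ m.properDivisors := by
    intro c hc
    rw [mem_Ico] at hc
    rw [Nat.mem_properDivisors]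
    exact ⟨Nat.gcd_dvd_right _ _,
      lt_of_le_of_lt (Nat.le_of_dvd hc.1 (Nat.gcd_dvd_left _ _)) hc.2⟩
  rw [← Finset.sum_fiberwise_of_maps_to hmaps (fun c => ((Nat.gcd c m : ℕ):ℝ)^3)]
  have step : ∀ d ∈ m.properDivisors,
      ∑ c ∈ (Ico 1 m).filter (fun c => Nat.gcd c m = d), ((Nat.gcd c m : ℕ):ℝ)^3
      ≤ (m:ℝ) * (d:ℝ)^2 := by
    intro d hd
    rw [Nat.mem_properDivisors] at hd
    have hd0 : 0 < d := Nat.pos_of_dvd_of_pos hd.1 (by omega)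
    have h1 : ∑ c ∈ (Ico 1 m).filter (fun c => Nat.gcd c m = d), ((Nat.gcd c m : ℕ):ℝ)^3
        = (((Ico 1 m).filter (fun c => Nat.gcd c m = d)).card : ℝ) * (d:ℝ)^3 := by
      rw [Finset.sum_congr rfl (fun c hc => by
        rw [(Finset.mem_filter.1 hc).2]), Finset.sum_const, nsmul_eq_mul]
    rw [h1]
    have hcard : ((Ico 1 m).filter (fun c => Nat.gcd c m = d)).card ≤ m / d := by
      calc ((Ico 1 m).filter (fun c => Nat.gcd c m = d)).card
          ≤ ((Ico 1 m).filter (fun c => d ∣ c)).card := by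
            apply Finset.card_le_card
            intro c hc
            rw [Finset.mem_filter] at hc ⊢
            exact ⟨hc.1, hc.2 ▸ Nat.gcd_dvd_left _ _⟩
        _ ≤ m / d := by
            have hIco : Ico 1 m = Ioc 0 (m-1) := by
              ext c; simp only [mem_Ico, mem_Ioc]; omega
            rw [hIco, Nat.Ioc_filter_dvd_card_eq_div]
            exact Nat.div_le_div_right (by omega)
    calc (((Ico 1 m).filter (fun c => Nat.gcd c m = d)).card : ℝ) * (d:ℝ)^3
        ≤ (((m/d : ℕ)):ℝ) * (d:ℝ)^3 := by
          apply mul_le_mul_of_nonneg_right _ (by positivity)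
          exact_mod_cast hcard
      _ ≤ ((m:ℝ)/(d:ℝ)) * (d:ℝ)^3 :=
          mul_le_mul_of_nonneg_right (Nat.cast_div_le) (by positivity)
      _ = (m:ℝ) * (d:ℝ)^2 := by
          have : (d:ℝ) ≠ 0 := Nat.cast_ne_zero.mpr (by omega)
          field_simp
  calc ∑ d ∈ m.properDivisors,
        ∑ c ∈ (Ico 1 m).filter (fun c => Nat.gcd c m = d), ((Nat.gcd c m : ℕ):ℝ)^3
      ≤ ∑ d ∈ m.properDivisors, (m:ℝ)*(d:ℝ)^2 := Finset.sum_le_sum step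
    _ = (m:ℝ) * ∑ d ∈ m.properDivisors, (d:ℝ)^2 := by rw [Finset.mul_sum]
    _ ≤ (m:ℝ) * ((m:ℝ)^2 - m) :=
        mul_le_mul_of_nonneg_left (properDivisors_sum_sq m (by omega)) (by positivity)
    _ = (m:ℝ)^3 - (m:ℝ)^2 := by ring



lemma mv_main : ∀ m : ℕ, Squarefree m → ∀ n t : ℕ, ∀ u v : Fin t → Fin n → ℕ,
    IsMVFamily m n t u v → (t:ℝ) ≤ (m:ℝ) ^ ((n:ℝ)/2 + 3) := by
  intro m
  induction m using Nat.strong_induction_on with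
  | _ m IH =>
  intro hsf n t u v hmv
  have hm0 : m ≠ 0 := hsf.ne_zero
  have hm1 : 1 ≤ m := Nat.pos_of_ne_zero hm0
  have hm1' : (1:ℝ) ≤ (m:ℝ) := by exact_mod_cast hm1
  have hmpos : (0:ℝ) < (m:ℝ) := by linarith
  set ζ : ℂ := Complex.exp (2 * Real.pi * Complex.I / m) with hζdef
  have hζ : IsPrimitiveRoot ζ m := Complex.isPrimitiveRoot_exp m hm0
  set W : Fin t → Fin t → ℕ := fun i j => ∑ k, u i k * v j k with hW
  have horth : ∀ i j : Fin t, ∑ c ∈ range m, (ζ ^ (W i j)) ^ c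
      = if i = j then (m:ℂ) else 0 := by
    intro i j
    by_cases hij : i = j
    · subst hij
      have h1 : ζ ^ (W i i) = 1 :=
        (hζ.pow_eq_one_iff_dvd _).mpr (Nat.dvd_of_mod_eq_zero (hmv.2.2.1 i))
      rw [h1, if_pos rfl]
      simp
    · rw [if_neg hij]
      have hne : ζ ^ (W i j) ≠ 1 := by
        intro h
        exact hmv.2.2.2 i j hij
          (Nat.mod_eq_zero_of_dvd ((hζ.pow_eq_one_iff_dvd _).mp h))
      rw [geom_sum_eq hne]
      have h2 : (ζ ^ (W i j)) ^ m = 1 := by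
        rw [← pow_mul, mul_comm, pow_mul, hζ.pow_eq_one, one_pow]
      rw [h2]
      simp
  have htotal : ∑ c ∈ range m, (∑ i : Fin t, ∑ j : Fin t, ζ ^ (c * W i j))
      = (t:ℂ) * m := by
    rw [Finset.sum_comm]
    calc ∑ i : Fin t, ∑ c ∈ range m, ∑ j : Fin t, ζ ^ (c * W i j)
        = ∑ i : Fin t, ∑ j : Fin t, ∑ c ∈ range m, (ζ ^ (W i j)) ^ c := by
          refine Finset.sum_congr rfl fun i _ => ?_
          rw [Finset.sum_comm]
          exact Finset.sum_congr rfl fun j _ => Finset.sum_congr rfl fun c _ => by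
            rw [mul_comm c (W i j), pow_mul]
      _ = ∑ i : Fin t, ∑ j : Fin t, (if i = j then (m:ℂ) else 0) := by
          exact Finset.sum_congr rfl fun i _ => Finset.sum_congr rfl fun j _ => horth i j
      _ = ∑ _i : Fin t, (m:ℂ) := by
          refine Finset.sum_congr rfl fun i _ => ?_
          rw [Finset.sum_ite_eq]
          simp
      _ = (t:ℂ) * m := by
          rw [Finset.sum_const, Finset.card_univ, Fintype.card_fin, nsmul_eq_mul]
  have hsplit : range m = insert 0 (Ico 1 m) := by
    ext c
    simp only [Finset.mem_range, Finset.mem_Ico, Finset.mem_insert]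
    omega
  have hzero : (∑ i : Fin t, ∑ j : Fin t, ζ ^ (0 * W i j)) = (t:ℂ) * t := by
    simp [Finset.sum_const, Finset.card_univ]
  have hmain0 : (t:ℂ) * t = (t:ℂ) * m
      - ∑ c ∈ Ico 1 m, (∑ i : Fin t, ∑ j : Fin t, ζ ^ (c * W i j)) := by
    have h0 : (0:ℕ) ∉ Ico 1 m := by simp
    rw [hsplit, Finset.sum_insert h0, hzero] at htotal
    linear_combination htotal
  have habs : (t:ℝ) * t ≤ (t:ℝ) * m
      + ∑ c ∈ Ico 1 m, ‖∑ i : Fin t, ∑ j : Fin t, ζ ^ (c * W i j)‖ := by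
    have h1 : ‖(t:ℂ) * t‖ = (t:ℝ) * t := by
      simp [map_mul, Complex.norm_natCast]
    have h2 : ‖(t:ℂ) * m‖ = (t:ℝ) * m := by
      simp [map_mul, Complex.norm_natCast]
    calc (t:ℝ) * t = ‖(t:ℂ) * t‖ := h1.symm
      _ = ‖(t:ℂ) * m
          - ∑ c ∈ Ico 1 m, (∑ i : Fin t, ∑ j : Fin t, ζ ^ (c * W i j))‖ := by
            rw [← hmain0]
      _ ≤ ‖(t:ℂ) * m‖
          + ‖∑ c ∈ Ico 1 m, (∑ i : Fin t, ∑ j : Fin t, ζ ^ (c * W i j))‖ := by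
            exact norm_sub_le _ _
      _ ≤ (t:ℝ) * m
          + ∑ c ∈ Ico 1 m, ‖∑ i : Fin t, ∑ j : Fin t, ζ ^ (c * W i j)‖ := by
            rw [h2]
            exact add_le_add_right (norm_sum_le _ _) _
  have hper : ∀ c ∈ Ico 1 m, ‖∑ i : Fin t, ∑ j : Fin t, ζ ^ (c * W i j)‖
      ≤ (t:ℝ) * ((m:ℝ) ^ ((n:ℝ)/2) * ((Nat.gcd c m : ℕ):ℝ)^3) := by
    intro c hc
    rw [Finset.mem_Ico] at hc
    obtain ⟨hc1, hcm⟩ := hc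
    set g := Nat.gcd c m with hg
    have hgpos : 0 < g := Nat.gcd_pos_of_pos_right c (by omega)
    have hgdm : g ∣ m := Nat.gcd_dvd_right c m
    have hgdc : g ∣ c := Nat.gcd_dvd_left c m
    have hglt : g < m := lt_of_le_of_lt (Nat.le_of_dvd hc1 hgdc) hcm
    set s := m / g with hsdef
    have hsg : s * g = m := Nat.div_mul_cancel hgdm
    have hspos : 0 < s := Nat.div_pos (Nat.le_of_dvd (by omega) hgdm) hgpos
    have hζg : IsPrimitiveRoot (ζ ^ g) s :=
      hζ.pow (by omega) (by rw [← hsg, mul_comm])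
    have hη : IsPrimitiveRoot (ζ ^ c) s := by
      have hcg : g * (c / g) = c := Nat.mul_div_cancel' hgdc
      have hco : Nat.Coprime (c / g) s := by
        have h' := Nat.coprime_div_gcd_div_gcd (hg ▸ hgpos)
        rw [← hg, ← hsdef] at h'
        exact h'
      have h'' := hζg.pow_of_coprime (c / g) hco
      rwa [← pow_mul, hcg] at h''
    have hrw : (∑ i : Fin t, ∑ j : Fin t, ζ ^ (c * W i j))
        = ∑ i : Fin t, ∑ j : Fin t, (ζ^c) ^ (W i j) := by
      refine Finset.sum_congr rfl fun i _ => Finset.sum_congr rfl fun j _ => ?_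
      rw [← pow_mul]
    rw [hrw]
    have hcb := charsum_bound hspos hη u v
    have hcop : Nat.Coprime s g := by
      have h2 : Nat.gcd s g * Nat.gcd s g ∣ m := by
        calc Nat.gcd s g * Nat.gcd s g ∣ s * g :=
          mul_dvd_mul (Nat.gcd_dvd_left s g) (Nat.gcd_dvd_right s g)
        _ = m := hsg
      have h3 := hsf _ h2
      simpa [Nat.isUnit_iff] using h3
    set D : ℝ := (g:ℝ) ^ ((n:ℝ)/2 + 3) with hD
    have hIH : ∀ t' (u' v' : Fin t' → Fin n → ℕ), IsMVFamily g n t' u' v' → (t' : ℝ) ≤ D :=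
      fun t' u' v' h' => IH g hglt (hsf.squarefree_of_dvd hgdm) n t' u' v' h'
    have hcu : ∀ i : Fin t,
        ((univ.filter fun i' => ∀ k, u i' k % s = u i k % s).card : ℝ) ≤ D :=
      fun i => mv_sub hgpos hsg hcop hmv i hIH
    have hcv : ∀ j : Fin t,
        ((univ.filter fun j' => ∀ k, v j' k % s = v j k % s).card : ℝ) ≤ D :=
      fun j => mv_sub hgpos hsg hcop (mv_swap hmv) j hIH
    have hD0 : (0:ℝ) ≤ D := Real.rpow_nonneg (Nat.cast_nonneg g) _
    have hsum_u : ∑ i : Fin t,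
        ((univ.filter fun i' => ∀ k, u i' k % s = u i k % s).card : ℝ) ≤ (t:ℝ) * D := by
      calc ∑ i : Fin t, ((univ.filter fun i' => ∀ k, u i' k % s = u i k % s).card : ℝ)
          ≤ ∑ _i : Fin t, D := Finset.sum_le_sum fun i _ => hcu i
        _ = (t:ℝ) * D := by
            rw [Finset.sum_const, Finset.card_univ, Fintype.card_fin, nsmul_eq_mul]
    have hsum_v : ∑ j : Fin t,
        ((univ.filter fun j' => ∀ k, v j' k % s = v j k % s).card : ℝ) ≤ (t:ℝ) * D := by
      calc ∑ j : Fin t, ((univ.filter fun j' => ∀ k, v j' k % s = v j k % s).card : ℝ)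
          ≤ ∑ _j : Fin t, D := Finset.sum_le_sum fun j _ => hcv j
        _ = (t:ℝ) * D := by
            rw [Finset.sum_const, Finset.card_univ, Fintype.card_fin, nsmul_eq_mul]
    refine hcb.trans ?_
    have hsn0 : (0:ℝ) ≤ (s:ℝ)^n := by positivity
    have h1 : Real.sqrt (∑ i : Fin t,
        ((univ.filter fun i' => ∀ k, u i' k % s = u i k % s).card : ℝ))
        ≤ Real.sqrt ((t:ℝ) * D) := Real.sqrt_le_sqrt hsum_u
    have h2 : Real.sqrt ((s:ℝ)^n * ∑ j : Fin t,
        ((univ.filter fun j' => ∀ k, v j' k % s = v j k % s).card : ℝ))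
        ≤ Real.sqrt ((s:ℝ)^n * ((t:ℝ) * D)) :=
      Real.sqrt_le_sqrt (mul_le_mul_of_nonneg_left hsum_v hsn0)
    calc Real.sqrt (∑ i : Fin t,
          ((univ.filter fun i' => ∀ k, u i' k % s = u i k % s).card : ℝ)) *
        Real.sqrt ((s:ℝ)^n * ∑ j : Fin t,
          ((univ.filter fun j' => ∀ k, v j' k % s = v j k % s).card : ℝ))
        ≤ Real.sqrt ((t:ℝ) * D) * Real.sqrt ((s:ℝ)^n * ((t:ℝ) * D)) :=
          mul_le_mul h1 h2 (Real.sqrt_nonneg _) (Real.sqrt_nonneg _)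
      _ = (t:ℝ) * D * Real.sqrt ((s:ℝ)^n) := by
          rw [Real.sqrt_mul hsn0]
          rw [show Real.sqrt ((t:ℝ)*D) * (Real.sqrt ((s:ℝ)^n) * Real.sqrt ((t:ℝ)*D))
              = (Real.sqrt ((t:ℝ)*D) * Real.sqrt ((t:ℝ)*D)) * Real.sqrt ((s:ℝ)^n) by ring]
          rw [Real.mul_self_sqrt (by positivity)]
      _ ≤ (t:ℝ) * ((m:ℝ) ^ ((n:ℝ)/2) * ((g:ℕ):ℝ)^3) := by
          have e1 : Real.sqrt ((s:ℝ)^n) = (s:ℝ) ^ ((n:ℝ)/2) := by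
            rw [Real.sqrt_eq_rpow, ← Real.rpow_natCast (s:ℝ) n,
              ← Real.rpow_mul (Nat.cast_nonneg s)]
            congr 1
            ring
          have e2 : D = (g:ℝ)^((n:ℝ)/2) * (g:ℝ)^(3:ℕ) := by
            rw [hD, Real.rpow_add (by exact_mod_cast hgpos : (0:ℝ) < (g:ℝ))]
            congr 1
            rw [← Real.rpow_natCast (g:ℝ) 3]
            norm_num
          have e3 : (s:ℝ)^((n:ℝ)/2) * (g:ℝ)^((n:ℝ)/2) = (m:ℝ)^((n:ℝ)/2) := by
            rw [← Real.mul_rpow (Nat.cast_nonneg s) (Nat.cast_nonneg g)]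
            congr 1
            exact_mod_cast congrArg (Nat.cast (R := ℝ)) hsg
          rw [e1, e2]
          apply le_of_eq
          calc (t:ℝ) * ((g:ℝ)^((n:ℝ)/2) * (g:ℝ)^(3:ℕ)) * (s:ℝ)^((n:ℝ)/2)
              = (t:ℝ) * (((s:ℝ)^((n:ℝ)/2) * (g:ℝ)^((n:ℝ)/2)) * (g:ℝ)^(3:ℕ)) := by ring
            _ = (t:ℝ) * ((m:ℝ)^((n:ℝ)/2) * ((g:ℕ):ℝ)^3) := by rw [e3]
  have hgcd := gcd_cube_sum m
  have hfinsum : ∑ c ∈ Ico 1 m, ‖∑ i : Fin t, ∑ j : Fin t, ζ ^ (c * W i j)‖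
      ≤ (t:ℝ) * ((m:ℝ)^((n:ℝ)/2) * ((m:ℝ)^3 - (m:ℝ)^2)) := by
    calc ∑ c ∈ Ico 1 m, ‖∑ i : Fin t, ∑ j : Fin t, ζ ^ (c * W i j)‖
        ≤ ∑ c ∈ Ico 1 m, (t:ℝ) * ((m:ℝ) ^ ((n:ℝ)/2) * ((Nat.gcd c m : ℕ):ℝ)^3) :=
          Finset.sum_le_sum hper
      _ = (t:ℝ) * ((m:ℝ)^((n:ℝ)/2) * ∑ c ∈ Ico 1 m, ((Nat.gcd c m : ℕ):ℝ)^3) := by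
          simp only [Finset.mul_sum]
      _ ≤ (t:ℝ) * ((m:ℝ)^((n:ℝ)/2) * ((m:ℝ)^3 - (m:ℝ)^2)) := by
          apply mul_le_mul_of_nonneg_left _ (Nat.cast_nonneg t)
          exact mul_le_mul_of_nonneg_left hgcd (Real.rpow_nonneg (Nat.cast_nonneg m) _)
  rcases Nat.eq_zero_or_pos t with ht0 | htpos
  · rw [ht0]
    simp only [Nat.cast_zero]
    positivity
  · have htR : (0:ℝ) < t := by exact_mod_cast htpos
    have hlin : (t:ℝ) ≤ m + (m:ℝ)^((n:ℝ)/2) * ((m:ℝ)^3 - (m:ℝ)^2) := by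
      have hbig : (t:ℝ) * t ≤ (t:ℝ) * (m + (m:ℝ)^((n:ℝ)/2) * ((m:ℝ)^3 - (m:ℝ)^2)) := by
        calc (t:ℝ) * t ≤ (t:ℝ) * m
            + ∑ c ∈ Ico 1 m, ‖∑ i : Fin t, ∑ j : Fin t, ζ ^ (c * W i j)‖ := habs
          _ ≤ (t:ℝ) * m + (t:ℝ) * ((m:ℝ)^((n:ℝ)/2) * ((m:ℝ)^3 - (m:ℝ)^2)) :=
              add_le_add_right hfinsum _
          _ = (t:ℝ) * (m + (m:ℝ)^((n:ℝ)/2) * ((m:ℝ)^3 - (m:ℝ)^2)) := by ring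
      exact le_of_mul_le_mul_left hbig htR
    have e4 : (m:ℝ)^((n:ℝ)/2) * ((m:ℝ)^3 - (m:ℝ)^2)
        = (m:ℝ)^((n:ℝ)/2+3) - (m:ℝ)^((n:ℝ)/2+2) := by
      rw [mul_sub]
      congr 1
      · rw [show ((m:ℝ)^(3:ℕ)) = (m:ℝ)^((3:ℕ):ℝ) from (Real.rpow_natCast _ 3).symm,
          ← Real.rpow_add hmpos]
        norm_num
      · rw [show ((m:ℝ)^(2:ℕ)) = (m:ℝ)^((2:ℕ):ℝ) from (Real.rpow_natCast _ 2).symm,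
          ← Real.rpow_add hmpos]
        norm_num
    have e5 : (m:ℝ) ≤ (m:ℝ)^((n:ℝ)/2+2) := by
      conv_lhs => rw [← Real.rpow_one (m:ℝ)]
      apply Real.rpow_le_rpow_of_exponent_le hm1'
      have hn0 : (0:ℝ) ≤ (n:ℝ)/2 := by positivity
      linarith
    calc (t:ℝ) ≤ m + ((m:ℝ)^((n:ℝ)/2+3) - (m:ℝ)^((n:ℝ)/2+2)) := by rw [← e4]; exact hlin
      _ ≤ (m:ℝ)^((n:ℝ)/2+3) := by linarith

end MVAux

theorem stmt_15 (ε : ℝ) (hε : 0 < ε) :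
    ∃ M : ℕ, ∀ m : ℕ, M ≤ m → Squarefree m →
      ∀ (n t : ℕ) (u v : Fin t → Fin n → ℕ), IsMVFamily m n t u v →
        (t : ℝ) ≤ (m : ℝ) ^ ((n : ℝ) / 2 + 4 + ε) := by
  refine ⟨1, fun m _ hsf n t u v hmv => ?_⟩
  have h1 := MVAux.mv_main m hsf n t u v hmv
  refine h1.trans ?_
  apply Real.rpow_le_rpow_of_exponent_le
  · exact_mod_cast Nat.one_le_iff_ne_zero.mpr hsf.ne_zero
  · linarith
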